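/- Let N ≥ 1 and d ≥ 1. Let f_i : ℝ^d → ℝ for i = 1,…,N be twice continuously differentiable functions and y_1,…,y_N ∈ ℝ. Define the mean-squared-error loss L : ℝ^d → ℝ by L(w) = (1/(2N)) Σ_{i=1}^N (f_i(w) − y_i)². Suppose w* ∈ ℝ^d satisfies f_i(w*) = y_i for all i, and that for every nonzero X ∈ ℝ^d there exists i with Df_i(w*)[X] ≠ 0 (equivalently, the Gram matrix Σ_i ∇f_i(w*) ∇f_i(w*)ᵀ is positive definite). Then there exists ε > 0 such that L is strictly convex on the open ball of radius ε centered at w*. -/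

import Mathlib

open Metric

section Aux
variable {E : Type*} [NormedAddCommGroup E] [NormedSpace ℝ E]

lemma aux_hasDerivAt_line (φ : E → ℝ) (hφ : Differentiable ℝ φ) (w X : E) (t : ℝ) :
    HasDerivAt (fun s : ℝ => φ (w + s • X)) (fderiv ℝ φ (w + t • X) X) t := by
  have hγ : HasDerivAt (fun s : ℝ => w + s • X) X t := by
    simpa using ((hasDerivAt_id t).smul_const X).const_add w
  exact (hφ (w + t • X)).hasFDerivAt.comp_hasDerivAt t hγ

lemma aux_hasDerivAt_fderiv_line (φ : E → ℝ) (hφ : ContDiff ℝ 2 φ) (w X : E) (t : ℝ) :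
    HasDerivAt (fun s : ℝ => fderiv ℝ φ (w + s • X) X)
      (fderiv ℝ (fderiv ℝ φ) (w + t • X) X X) t := by
  have hγ : HasDerivAt (fun s : ℝ => w + s • X) X t := by
    simpa using ((hasDerivAt_id t).smul_const X).const_add w
  have hD : ContDiff ℝ 1 (fderiv ℝ φ) := hφ.fderiv_right (by norm_num)
  have h1 : HasDerivAt (fun s : ℝ => fderiv ℝ φ (w + s • X))
      (fderiv ℝ (fderiv ℝ φ) (w + t • X) X) t :=
    (hD.differentiable one_ne_zero (w + t • X)).hasFDerivAt.comp_hasDerivAt t hγ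
  have := (ContinuousLinearMap.apply ℝ ℝ X).hasFDerivAt.comp_hasDerivAt t h1
  exact this

lemma aux_second_deriv_line (φ : E → ℝ) (hφ : ContDiff ℝ 2 φ) (w X : E) (t : ℝ) :
    deriv (deriv (fun s : ℝ => φ (w + s • X))) t
      = fderiv ℝ (fderiv ℝ φ) (w + t • X) X X := by
  have h1 : deriv (fun s : ℝ => φ (w + s • X)) = fun s => fderiv ℝ φ (w + s • X) X := by
    funext s; exact (aux_hasDerivAt_line φ (hφ.differentiable two_ne_zero) w X s).deriv
  rw [h1]
  exact (aux_hasDerivAt_fderiv_line φ hφ w X t).deriv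

lemma aux_strictConvexOn_of_hessian_pos {s : Set E} (hs : Convex ℝ s) (φ : E → ℝ)
    (hφ : ContDiff ℝ 2 φ)
    (hpos : ∀ w ∈ s, ∀ X : E, X ≠ 0 → 0 < fderiv ℝ (fderiv ℝ φ) w X X) :
    StrictConvexOn ℝ s φ := by
  refine ⟨hs, ?_⟩
  intro x hx z hz hxz a b ha hb hab
  set v := z - x with hv
  have hvne : v ≠ 0 := sub_ne_zero.mpr (Ne.symm hxz)
  set g : ℝ → ℝ := fun t => φ (x + t • v) with hg
  have hmem : ∀ t ∈ Set.Icc (0:ℝ) 1, x + t • v ∈ s := by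
    intro t ht
    have h := hs hx hz (by linarith [ht.2] : (0:ℝ) ≤ 1 - t) ht.1 (by ring)
    have : (1 - t) • x + t • z = x + t • v := by rw [hv]; module
    rwa [this] at h
  have hγ : ContDiff ℝ 2 (fun t : ℝ => x + t • v) :=
    contDiff_const.add (contDiff_id.smul contDiff_const)
  have hgc : ContDiff ℝ 2 g := hφ.comp hγ
  have hstrict : StrictConvexOn ℝ (Set.Icc (0:ℝ) 1) g := by
    apply strictConvexOn_of_deriv2_pos (convex_Icc 0 1) hgc.continuous.continuousOn
    intro t ht
    rw [interior_Icc] at ht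
    show 0 < deriv (deriv g) t
    rw [hg, aux_second_deriv_line φ hφ x v t]
    exact hpos _ (hmem t ⟨ht.1.le, ht.2.le⟩) v hvne
  have h0 : (0:ℝ) ∈ Set.Icc (0:ℝ) 1 := by norm_num
  have h1 : (1:ℝ) ∈ Set.Icc (0:ℝ) 1 := by norm_num
  have key := hstrict.2 h0 h1 (by norm_num) ha hb hab
  have e1 : a • (0:ℝ) + b • 1 = b := by simp
  rw [e1] at key
  have e2 : a • x + b • z = x + b • v := by
    rw [hv, show a = 1 - b from by linarith]
    module
  show φ (a • x + b • z) < a • φ x + b • φ z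
  rw [e2]
  simpa [hg, hv] using key

end Aux

/-- Theorem 3 of the paper (precise form): if `w*` interpolates the noiseless
data and the first derivatives of the network outputs at `w*` are jointly
nondegenerate (for every nonzero direction `X` some `Df_i(w*)[X] ≠ 0`), then
the MSE loss is strictly convex on a small ball around `w*`. -/
theorem mse_strictly_convex_near_interpolation (N d : ℕ) (hN : 1 ≤ N) (hd : 1 ≤ d)
    (f : Fin N → EuclideanSpace ℝ (Fin d) → ℝ)
    (hf : ∀ i, ContDiff ℝ 2 (f i))
    (y : Fin N → ℝ) (wstar : EuclideanSpace ℝ (Fin d))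
    (hinterp : ∀ i, f i wstar = y i)
    (hnondeg : ∀ X : EuclideanSpace ℝ (Fin d), X ≠ 0 →
      ∃ i, fderiv ℝ (f i) wstar X ≠ 0) :
    ∃ ε > 0, StrictConvexOn ℝ (Metric.ball wstar ε)
      (fun w => (1 / (2 * (N : ℝ))) * ∑ i, (f i w - y i) ^ 2) := by
  set c : ℝ := 1 / (2 * (N : ℝ)) with hc
  have hcpos : 0 < c := by
    have : (0:ℝ) < N := by exact_mod_cast hN
    positivity
  set L : EuclideanSpace ℝ (Fin d) → ℝ := fun w => c * ∑ i, (f i w - y i) ^ 2 with hL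
  have hLsmooth : ContDiff ℝ 2 L :=
    contDiff_const.mul (ContDiff.sum fun i _ => ((hf i).sub (contDiff_const (c := y i))).pow 2)
  -- Hessian at wstar along X
  have hAstar : ∀ X : EuclideanSpace ℝ (Fin d), X ≠ 0 → 0 < fderiv ℝ (fderiv ℝ L) wstar X X := by
    intro X hX
    have key : fderiv ℝ (fderiv ℝ L) wstar X X
        = c * ∑ i, 2 * (fderiv ℝ (f i) wstar X) ^ 2 := by
      have h2 := aux_second_deriv_line L hLsmooth wstar X 0
      rw [zero_smul, add_zero] at h2
      rw [← h2]
      -- compute deriv of g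
      have hder : deriv (fun s : ℝ => L (wstar + s • X))
          = fun s => c * ∑ i, 2 * (f i (wstar + s • X) - y i)
              * fderiv ℝ (f i) (wstar + s • X) X := by
        funext t
        have hterm : ∀ i ∈ Finset.univ, HasDerivAt
            (fun s : ℝ => (f i (wstar + s • X) - y i) ^ 2)
            (2 * (f i (wstar + t • X) - y i) * fderiv ℝ (f i) (wstar + t • X) X) t := by
          intro i _
          have h := ((aux_hasDerivAt_line (f i)
            ((hf i).differentiable two_ne_zero) wstar X t).sub_const (y i)).pow 2
          exact h.congr_deriv (by ring)
        have := (HasDerivAt.fun_sum hterm).const_mul c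
        exact this.deriv
      rw [hder]
      -- second derivative at 0
      have hterm2 : ∀ i ∈ Finset.univ, HasDerivAt
          (fun s : ℝ => 2 * (f i (wstar + s • X) - y i) * fderiv ℝ (f i) (wstar + s • X) X)
          (2 * (fderiv ℝ (f i) wstar X) ^ 2) 0 := by
        intro i _
        have hp : HasDerivAt (fun s : ℝ => 2 * (f i (wstar + s • X) - y i))
            (2 * fderiv ℝ (f i) (wstar + (0:ℝ) • X) X) 0 :=
          ((aux_hasDerivAt_line (f i) ((hf i).differentiable two_ne_zero) wstar X 0).sub_const
            (y i)).const_mul 2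
        have hq := aux_hasDerivAt_fderiv_line (f i) (hf i) wstar X 0
        have h := hp.mul hq
        simp only [zero_smul, add_zero] at h
        exact h.congr_deriv (by rw [hinterp i]; ring)
      have := (HasDerivAt.fun_sum hterm2).const_mul c
      exact this.deriv
    rw [key]
    obtain ⟨i₀, hi₀⟩ := hnondeg X hX
    have hsum : 0 < ∑ i, 2 * (fderiv ℝ (f i) wstar X) ^ 2 := by
      apply Finset.sum_pos' (fun i _ => by positivity)
      exact ⟨i₀, Finset.mem_univ i₀, by have := sq_pos_iff.mpr hi₀; linarith⟩
    exact mul_pos hcpos hsum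
  -- continuity and tube lemma
  have hD1 : ContDiff ℝ 1 (fderiv ℝ L) := hLsmooth.fderiv_right (by norm_num)
  have hAcont : Continuous (fderiv ℝ (fderiv ℝ L)) := hD1.continuous_fderiv one_ne_zero
  have hφcont : Continuous (fun p : EuclideanSpace ℝ (Fin d) × EuclideanSpace ℝ (Fin d) => fderiv ℝ (fderiv ℝ L) p.1 p.2 p.2) :=
    ((hAcont.comp continuous_fst).clm_apply continuous_snd).clm_apply continuous_snd
  have hopen : IsOpen {p : EuclideanSpace ℝ (Fin d) × EuclideanSpace ℝ (Fin d) | 0 < fderiv ℝ (fderiv ℝ L) p.1 p.2 p.2} :=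
    isOpen_lt continuous_const hφcont
  have hsub : ({wstar} : Set (EuclideanSpace ℝ (Fin d))) ×ˢ (sphere (0:EuclideanSpace ℝ (Fin d)) 1)
      ⊆ {p : EuclideanSpace ℝ (Fin d) × EuclideanSpace ℝ (Fin d) | 0 < fderiv ℝ (fderiv ℝ L) p.1 p.2 p.2} := by
    rintro ⟨w, X⟩ ⟨hw, hXs⟩
    simp only [Set.mem_singleton_iff] at hw
    subst hw
    have hXne : X ≠ 0 := by
      intro h
      rw [mem_sphere_iff_norm, sub_zero] at hXs
      rw [h, norm_zero] at hXs; norm_num at hXs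
    exact hAstar X hXne
  obtain ⟨u, v, huo, hvo, hwu, hsv, huv⟩ :=
    generalized_tube_lemma isCompact_singleton (isCompact_sphere (0:EuclideanSpace ℝ (Fin d)) 1) hopen hsub
  obtain ⟨ε, hε, hball⟩ := Metric.isOpen_iff.mp huo wstar (hwu rfl)
  refine ⟨ε, hε, ?_⟩
  apply aux_strictConvexOn_of_hessian_pos (convex_ball wstar ε) L hLsmooth
  intro w hw X hX
  have hXnorm : (0:ℝ) < ‖X‖ := norm_pos_iff.mpr hX
  set r : ℝ := ‖X‖⁻¹ with hr
  have hrpos : 0 < r := by positivity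
  have hY : r • X ∈ sphere (0:EuclideanSpace ℝ (Fin d)) 1 := by
    rw [mem_sphere_iff_norm, sub_zero, norm_smul, hr, Real.norm_eq_abs,
      abs_inv, abs_norm]
    field_simp
  have hmem : (w, r • X) ∈ u ×ˢ v := ⟨hball hw, hsv hY⟩
  have hpos := huv hmem
  simp only [Set.mem_setOf_eq] at hpos
  simp only [map_smul, ContinuousLinearMap.smul_apply, smul_eq_mul] at hpos
  nlinarith [hpos, mul_pos hrpos hrpos]
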